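/- Let n ≥ 2, let I ⊆ ℝ be a nondegenerate interval, and let f = (f_1,…,f_n) satisfy condition (⋆). Then the generalized quasi-arithmetic mean M_f is a mean on I, i.e., for all (x_1,…,x_n) ∈ Iⁿ one has min(x_1,…,x_n) ≤ M_f(x_1,…,x_n) ≤ max(x_1,…,x_n). -/
import Mathlib


open Finset

/-- Condition (⋆): the functions are continuous, monotone in the same sense, and
not simultaneously constant on any nondegenerate subinterval of `I`. -/
def CondStar {n : ℕ} (I : Set ℝ) (f : Fin n → ℝ → ℝ) : Prop :=
  (∀ k, ContinuousOn (f k) I) ∧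
  ((∀ k, MonotoneOn (f k) I) ∨ (∀ k, AntitoneOn (f k) I)) ∧
  (∀ a b : ℝ, a ∈ I → b ∈ I → a < b →
    ∃ k, ∃ s ∈ Set.Icc a b, ∃ t ∈ Set.Icc a b, f k s ≠ f k t)

/-- `F = f₁ + ⋯ + fₙ`. -/
noncomputable def Fsum {n : ℕ} (f : Fin n → ℝ → ℝ) : ℝ → ℝ := fun t => ∑ k, f k t

/-- The generalized quasi-arithmetic mean `M_f(x) = F⁻¹(f₁(x₁) + ⋯ + fₙ(xₙ))`. -/
noncomputable def Mf {n : ℕ} (I : Set ℝ) (f : Fin n → ℝ → ℝ) (x : Fin n → ℝ) : ℝ :=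
  Function.invFunOn (Fsum f) I (∑ k, f k (x k))

/-- A mean `M` on `Iⁿ` is `σ`-balanced if for all `x ∈ Iⁿ`, with `u := M x`,
`M (M (u_{σ(1)}(x,u)), …, M (u_{σ(n)}(x,u))) = u`, where `u_k(x,t)` replaces the
`k`-th coordinate of `x` by `t`. -/
def SigmaBalanced {n : ℕ} (I : Set ℝ) (σ : Equiv.Perm (Fin n))
    (M : (Fin n → ℝ) → ℝ) : Prop :=
  ∀ x : Fin n → ℝ, (∀ k, x k ∈ I) →
    M (fun k => M (Function.update x (σ k) (M x))) = M x

/-- `v_k(x) := M_f(u_k(x, M_f(x)))`. -/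
noncomputable def vmap {n : ℕ} (I : Set ℝ) (f : Fin n → ℝ → ℝ) (k : Fin n)
    (x : Fin n → ℝ) : ℝ :=
  Mf I f (Function.update x k (Mf I f x))

lemma fsum_injOn {n : ℕ} (I : Set ℝ) (hI : I.OrdConnected)
    (f : Fin n → ℝ → ℝ) (hf : CondStar I f) : Set.InjOn (Fsum f) I := by
  obtain ⟨hc, hmono, hnc⟩ := hf
  have key : ∀ a ∈ I, ∀ b ∈ I, a < b → Fsum f a ≠ Fsum f b := by
    intro a ha b hb hab heq
    have hIcc : Set.Icc a b ⊆ I := hI.out ha hb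
    obtain ⟨k, s, hs, t, ht, hst⟩ := hnc a b ha hb hab
    rcases hmono with hm | hm
    · have hall : ∀ k, f k a = f k b := by
        have := (Finset.sum_eq_sum_iff_of_le
          (fun k _ => hm k ha hb hab.le)).mp heq
        exact fun k => this k (Finset.mem_univ k)
      have hconst : ∀ u ∈ Set.Icc a b, f k u = f k a := by
        intro u hu
        have h1 := hm k ha (hIcc hu) hu.1
        have h2 := hm k (hIcc hu) hb hu.2
        linarith [hall k]
      exact hst (by rw [hconst s hs, hconst t ht])
    · have hall : ∀ k, f k b = f k a := by
        have := (Finset.sum_eq_sum_iff_of_le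
          (fun k _ => hm k ha hb hab.le)).mp heq.symm
        exact fun k => this k (Finset.mem_univ k)
      have hconst : ∀ u ∈ Set.Icc a b, f k u = f k a := by
        intro u hu
        have h1 := hm k ha (hIcc hu) hu.1
        have h2 := hm k (hIcc hu) hb hu.2
        linarith [hall k]
      exact hst (by rw [hconst s hs, hconst t ht])
  intro a ha b hb hab
  rcases lt_trichotomy a b with h | h | h
  · exact absurd hab (key a ha b hb h)
  · exact h
  · exact absurd hab.symm (key b hb a ha h)

/-- `M_f` is a mean on `I`:
`min(x_1,…,x_n) ≤ M_f(x) ≤ max(x_1,…,x_n)` for all `x ∈ Iⁿ`. -/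
theorem stmt16 {n : ℕ} (hn : 2 ≤ n) (I : Set ℝ) (hI : I.OrdConnected)
    (hne : ∃ a ∈ I, ∃ b ∈ I, a < b)
    (f : Fin n → ℝ → ℝ) (hf : CondStar I f) :
    ∀ x : Fin n → ℝ, (∀ k, x k ∈ I) →
      Finset.univ.inf' ⟨⟨0, by omega⟩, Finset.mem_univ _⟩ x ≤ Mf I f x ∧
        Mf I f x ≤ Finset.univ.sup' ⟨⟨0, by omega⟩, Finset.mem_univ _⟩ x := by
  intro x hx
  have hinj := fsum_injOn I hI f hf
  obtain ⟨hc, hmono, -⟩ := hf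
  have : NeZero n := ⟨by omega⟩
  have H : (Finset.univ : Finset (Fin n)).Nonempty := Finset.univ_nonempty
  set m := Finset.univ.inf' H x with hm_def
  set M := Finset.univ.sup' H x with hM_def
  obtain ⟨i, -, him⟩ := Finset.exists_mem_eq_inf' H x
  obtain ⟨j, -, hjM⟩ := Finset.exists_mem_eq_sup' H x
  have hmI : m ∈ I := by rw [hm_def, him]; exact hx i
  have hMI : M ∈ I := by rw [hM_def, hjM]; exact hx j
  have hmx : ∀ k, m ≤ x k := fun k => Finset.inf'_le x (Finset.mem_univ k)
  have hxM : ∀ k, x k ≤ M := fun k => Finset.le_sup' x (Finset.mem_univ k)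
  have hmM : m ≤ M := (hmx j).trans (hjM ▸ le_refl _)
  have hIcc : Set.Icc m M ⊆ I := hI.out hmI hMI
  set y := ∑ k, f k (x k) with hy_def
  have hy : y ∈ Set.uIcc (Fsum f m) (Fsum f M) := by
    rcases hmono with hmon | hmon
    · have hle : Fsum f m ≤ Fsum f M := Finset.sum_le_sum
        (fun k _ => hmon k hmI hMI hmM)
      rw [Set.uIcc_of_le hle]
      exact ⟨Finset.sum_le_sum (fun k _ => hmon k hmI (hx k) (hmx k)),
        Finset.sum_le_sum (fun k _ => hmon k (hx k) hMI (hxM k))⟩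
    · have hle : Fsum f M ≤ Fsum f m := Finset.sum_le_sum
        (fun k _ => hmon k hmI hMI hmM)
      rw [Set.uIcc_of_ge hle]
      exact ⟨Finset.sum_le_sum (fun k _ => hmon k (hx k) hMI (hxM k)),
        Finset.sum_le_sum (fun k _ => hmon k hmI (hx k) (hmx k))⟩
  have hcont : ContinuousOn (Fsum f) (Set.uIcc m M) := by
    apply continuousOn_finset_sum
    intro k _
    exact (hc k).mono ((Set.uIcc_of_le hmM) ▸ hIcc)
  obtain ⟨c, hc_mem, hc_eq⟩ := intermediate_value_uIcc hcont hy
  rw [Set.uIcc_of_le hmM] at hc_mem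
  have hcI : c ∈ I := hIcc hc_mem
  have hyim : y ∈ Fsum f '' I := ⟨c, hcI, hc_eq⟩
  have hMfI : Mf I f x ∈ I := Function.invFunOn_mem ⟨c, hcI, hc_eq⟩
  have hMfeq : Fsum f (Mf I f x) = y := Function.invFunOn_eq ⟨c, hcI, hc_eq⟩
  have : Mf I f x = c := hinj hMfI hcI (hMfeq.trans hc_eq.symm)
  rw [this]
  exact hc_mem
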